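/- Every set S destabilising the chain graph Ch_k (k ≥ 2) has size at least 3, and |S| = 3 holds exactly when S = N[v] for some bivalent vertex v of Ch_k. -/

import Mathlib

open SimpleGraph

/-- The independence number of a graph. -/
noncomputable def indepNum {V : Type} (G : SimpleGraph V) : ℕ :=
  sSup {n : ℕ | ∃ s : Set V, s.Finite ∧ s.ncard = n ∧ ∀ a ∈ s, ∀ b ∈ s, ¬ G.Adj a b}

/-- The number of edges of a graph. -/
noncomputable def numEdges {V : Type} (G : SimpleGraph V) : ℕ := G.edgeSet.ncard

/-- The degree (valency) of a vertex. -/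
noncomputable def deg {V : Type} (G : SimpleGraph V) (v : V) : ℕ := (G.neighborSet v).ncard

/-- The second valency `d²(v) = ∑_{w ∈ N(v)} d(w)`. -/
noncomputable def secondDeg {V : Type} (G : SimpleGraph V) (v : V) : ℕ :=
  ∑ᶠ w ∈ G.neighborSet v, deg G w

/-- `p = (a,b,c,d)` is an (ordered) 4-cycle of `G`. -/
def IsC4 {V : Type} (G : SimpleGraph V) (p : V × V × V × V) : Prop :=
  G.Adj p.1 p.2.1 ∧ G.Adj p.2.1 p.2.2.1 ∧ G.Adj p.2.2.1 p.2.2.2 ∧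
    G.Adj p.2.2.2 p.1 ∧ p.1 ≠ p.2.2.1 ∧ p.2.1 ≠ p.2.2.2

/-- The number of 4-cycles of `G`; each 4-cycle yields 8 ordered tuples. -/
noncomputable def numC4 {V : Type} (G : SimpleGraph V) : ℕ :=
  {p : V × V × V × V | IsC4 G p}.ncard / 8

/-- The number of 4-cycles of `G` containing a vertex of `S`. -/
noncomputable def numC4Through {V : Type} (G : SimpleGraph V) (S : Set V) : ℕ :=
  {p : V × V × V × V | IsC4 G p ∧ (p.1 ∈ S ∨ p.2.1 ∈ S ∨ p.2.2.1 ∈ S ∨ p.2.2.2 ∈ S)}.ncard / 8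

/-- The invariant `ν(G) = 3e(G) − 17n(G) + 35α(G) + N(C₄;G)`. -/
noncomputable def nu {V : Type} (G : SimpleGraph V) : ℤ :=
  3 * (numEdges G : ℤ) - 17 * (Nat.card V : ℤ) + 35 * (_root_.indepNum G : ℤ) + (numC4 G : ℤ)

/-- The closed neighbourhood `N[v]`. -/
def closedNbhd {V : Type} (G : SimpleGraph V) (v : V) : Set V := insert v (G.neighborSet v)

/-- `S` destabilises `G` : removing `S` decreases the independence number. -/
def Destab {V : Type} (G : SimpleGraph V) (S : Set V) : Prop :=
  _root_.indepNum (G.induce Sᶜ) < _root_.indepNum G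

/-- `G` is edge-critical (α-critical): removing any edge increases the independence number. -/
def EdgeCritical {V : Type} (G : SimpleGraph V) : Prop :=
  ∀ e ∈ G.edgeSet, _root_.indepNum G < _root_.indepNum (G.deleteEdges {e})

/-- The cycle graph on `ZMod m`. -/
def cycZ (m : ℕ) : SimpleGraph (ZMod m) := SimpleGraph.fromRel (fun i j => j = i + 1)

/-- `IsChainGraph G k` : `G` is (a copy of) the chain graph `Ch_k`.  `Ch_2 = C_5` and
`Ch_{k+1}` is obtained from `Ch_k` by picking a bivalent vertex `x` and adding new
vertices `v, w₁, w₂` with edges `vw₁`, `vw₂`, `w₁x` and `w₂y` for every `y ∈ N(x)`. -/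
inductive IsChainGraph : {V : Type} → SimpleGraph V → ℕ → Prop where
  | base {V : Type} (G : SimpleGraph V) (e : G ≃g cycZ 5) : IsChainGraph G 2
  | step {V : Type} (G : SimpleGraph V) (k : ℕ) (v w1 w2 x : V)
      (hvw1 : v ≠ w1) (hvw2 : v ≠ w2) (hw12 : w1 ≠ w2)
      (hx : x ∉ ({v, w1, w2} : Set V))
      (hchain : IsChainGraph (G.induce ({v, w1, w2} : Set V)ᶜ) k)
      (hdeg : deg (G.induce ({v, w1, w2} : Set V)ᶜ) ⟨x, hx⟩ = 2)
      (hv : ∀ u, G.Adj v u ↔ u = w1 ∨ u = w2)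
      (hw1 : ∀ u, G.Adj w1 u ↔ u = v ∨ u = x)
      (hw2 : ∀ u, G.Adj w2 u ↔ u = v ∨ (u ∉ ({v, w1, w2} : Set V) ∧ G.Adj x u)) :
      IsChainGraph G (k + 1)

set_option linter.unusedSectionVars false
set_option maxHeartbeats 1000000

def IsIndep {V : Type} (G : SimpleGraph V) (s : Set V) : Prop :=
  ∀ a ∈ s, ∀ b ∈ s, ¬ G.Adj a b

section basic
variable {V : Type} [Finite V] {G : SimpleGraph V} {s t : Set V}

lemma IsIndep.mono (h : IsIndep G s) (hts : t ⊆ s) : IsIndep G t :=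
  fun a ha b hb => h a (hts ha) b (hts hb)

lemma indep_insert {a : V} (h : IsIndep G s) (ha : ∀ b ∈ s, ¬ G.Adj a b) :
    IsIndep G (insert a s) := by
  have key : ∀ q ∈ insert a s, ¬ G.Adj a q := by
    intro q hq
    rcases Set.mem_insert_iff.1 hq with h' | h'
    · subst h'; exact fun h'' => (G.loopless.irrefl _) h''
    · exact ha q h'
  intro p hp q hq
  rcases Set.mem_insert_iff.1 hp with h' | h'
  · subst h'; exact key q hq
  · rcases Set.mem_insert_iff.1 hq with h'' | h''
    · subst h''; exact fun hadj => key p hp hadj.symm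
    · exact h p h' q h''

lemma indep_bdd : BddAbove {n : ℕ | ∃ s : Set V, s.Finite ∧ s.ncard = n ∧ ∀ a ∈ s, ∀ b ∈ s, ¬ G.Adj a b} := by
  refine ⟨Nat.card V, ?_⟩
  rintro n ⟨s, -, rfl, -⟩
  calc s.ncard ≤ (Set.univ : Set V).ncard := Set.ncard_le_ncard (Set.subset_univ s) (Set.toFinite _)
    _ = Nat.card V := Set.ncard_univ V

lemma le_indepNum (h : IsIndep G s) : s.ncard ≤ _root_.indepNum G :=
  le_csSup indep_bdd ⟨s, Set.toFinite s, rfl, h⟩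

lemma exists_max_indep (G : SimpleGraph V) : ∃ s : Set V, IsIndep G s ∧ s.ncard = _root_.indepNum G := by
  have h : _root_.indepNum G ∈ {n : ℕ | ∃ s : Set V, s.Finite ∧ s.ncard = n ∧ ∀ a ∈ s, ∀ b ∈ s, ¬ G.Adj a b} :=
    Nat.sSup_mem ⟨0, ∅, Set.finite_empty, by simp, by simp⟩ indep_bdd
  obtain ⟨s, -, hc, hi⟩ := h
  exact ⟨s, hi, hc⟩

lemma indepNum_le {n : ℕ} (h : ∀ s : Set V, IsIndep G s → s.ncard ≤ n) : _root_.indepNum G ≤ n := by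
  obtain ⟨s, hi, hc⟩ := exists_max_indep G
  exact hc ▸ h s hi

/-- transfer between induced subgraph and subsets -/
lemma isIndep_induce_iff {A : Set V} {s : Set ↥A} :
    IsIndep (G.induce A) s ↔ IsIndep G (Subtype.val '' s) := by
  constructor
  · rintro h a ⟨a', ha', rfl⟩ b ⟨b', hb', rfl⟩ hab
    exact h a' ha' b' hb' hab
  · intro h a ha b hb hab
    exact h a ⟨a, ha, rfl⟩ b ⟨b, hb, rfl⟩ hab

lemma le_indepNum_induce {A : Set V} (hs : s ⊆ A) (h : IsIndep G s) :
    s.ncard ≤ _root_.indepNum (G.induce A) := by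
  have : s = Subtype.val '' ((fun a : ↥A => a.1) ⁻¹' s) := by
    ext a; simp only [Set.mem_image, Set.mem_preimage]
    exact ⟨fun ha => ⟨⟨a, hs ha⟩, ha, rfl⟩, by rintro ⟨b, hb, rfl⟩; exact hb⟩
  rw [this, Set.ncard_image_of_injective _ Subtype.val_injective]
  refine le_indepNum ?_
  rw [isIndep_induce_iff, ← this]; exact h

lemma exists_indep_subset_card (G : SimpleGraph V) (A : Set V) :
    ∃ s : Set V, s ⊆ A ∧ IsIndep G s ∧ s.ncard = _root_.indepNum (G.induce A) := by
  obtain ⟨s, hi, hc⟩ := exists_max_indep (G.induce A)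
  refine ⟨Subtype.val '' s, ?_, isIndep_induce_iff.1 hi, ?_⟩
  · rintro a ⟨a', -, rfl⟩; exact a'.2
  · rw [Set.ncard_image_of_injective _ Subtype.val_injective, hc]

lemma not_destab_of {S : Set V} (s : Set V) (hs : s ⊆ Sᶜ) (h : IsIndep G s)
    (hc : _root_.indepNum G ≤ s.ncard) : ¬ Destab G S :=
  not_lt.2 (hc.trans (le_indepNum_induce hs h))

lemma Destab.bound {S : Set V} (hS : Destab G S) (hs : s ⊆ Sᶜ) (h : IsIndep G s) :
    s.ncard < _root_.indepNum G :=
  lt_of_le_of_lt (le_indepNum_induce hs h) hS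

lemma destab_of {U : Set V} (h : ∀ s : Set V, s ⊆ Uᶜ → IsIndep G s → s.ncard < _root_.indepNum G) :
    Destab G U := by
  obtain ⟨s, hsub, hi, hc⟩ := exists_indep_subset_card G Uᶜ
  have := h s hsub hi
  rwa [hc] at this

lemma exists_max_indep_avoiding {U : Set V} (h : ¬ Destab G U) :
    ∃ s : Set V, s ⊆ Uᶜ ∧ IsIndep G s ∧ _root_.indepNum G ≤ s.ncard := by
  obtain ⟨s, hsub, hi, hc⟩ := exists_indep_subset_card G Uᶜ
  exact ⟨s, hsub, hi, hc ▸ not_lt.1 h⟩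

end basic

section iso
variable {V W : Type} [Finite V] [Finite W] {G : SimpleGraph V} {H : SimpleGraph W}

lemma deg_def {V : Type} (G : SimpleGraph V) (v : V) : deg G v = (G.neighborSet v).ncard := rfl

-- real content:
lemma isIndep_map (e : G ≃g H) {s : Set V} (h : IsIndep G s) : IsIndep H (e '' s) := by
  rintro a ⟨a', ha', rfl⟩ b ⟨b', hb', rfl⟩ hab
  exact h a' ha' b' hb' (e.map_rel_iff.1 hab)

lemma indepNum_iso (e : G ≃g H) : _root_.indepNum G = _root_.indepNum H := by
  apply le_antisymm
  · apply indepNum_le; intro s hs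
    have := le_indepNum (isIndep_map e hs)
    rwa [Set.ncard_image_of_injective _ e.injective] at this
  · apply indepNum_le; intro s hs
    have := le_indepNum (isIndep_map e.symm hs)
    rwa [Set.ncard_image_of_injective _ e.symm.injective] at this

def isoInduce (e : G ≃g H) (B : Set V) : G.induce B ≃g H.induce (e '' B) where
  toEquiv := e.toEquiv.image B
  map_rel_iff' := by
    intro a b
    simp only [Equiv.image, Equiv.coe_fn_mk, comap_adj, Function.Embedding.coe_subtype]
    exact e.map_rel_iff

lemma destab_iso (e : G ≃g H) (S : Set V) : Destab G S ↔ Destab H (e '' S) := by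
  unfold Destab
  have h1 : (e '' S)ᶜ = e '' Sᶜ := by
    rw [← Set.image_compl_eq e.bijective]
  rw [h1, indepNum_iso (isoInduce e Sᶜ), indepNum_iso e]

lemma neighborSet_iso (e : G ≃g H) (v : V) : H.neighborSet (e v) = e '' G.neighborSet v := by
  ext w
  simp only [mem_neighborSet, Set.mem_image]
  constructor
  · intro h
    exact ⟨e.symm w, e.map_rel_iff.1 (by rwa [e.apply_symm_apply]), e.apply_symm_apply w⟩
  · rintro ⟨w', hw', rfl⟩
    exact e.map_rel_iff.2 hw'

lemma deg_iso (e : G ≃g H) (v : V) : deg H (e v) = deg G v := by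
  rw [deg_def, deg_def, neighborSet_iso e, Set.ncard_image_of_injective _ e.injective]

lemma closedNbhd_iso (e : G ≃g H) (v : V) : closedNbhd H (e v) = e '' closedNbhd G v := by
  unfold closedNbhd
  rw [Set.image_insert_eq, neighborSet_iso e]
end iso
section c5
abbrev C5 := cycZ 5

lemma c5_adj (a b : ZMod 5) : C5.Adj a b ↔ a ≠ b ∧ (b = a + 1 ∨ a = b + 1) := by
  simp [C5, cycZ, fromRel_adj]

lemma c5_adj' (a b : ZMod 5) : C5.Adj a b ↔ (b = a + 1 ∨ b = a + 4) := by
  rw [c5_adj]; revert a b; decide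

lemma c5_nbhd (a : ZMod 5) : C5.neighborSet a = {a + 1, a + 4} := by
  ext u
  rw [mem_neighborSet, c5_adj']
  simp [Set.mem_insert_iff]

lemma c5_deg (a : ZMod 5) : deg C5 a = 2 := by
  rw [deg_def, c5_nbhd]
  rw [Set.ncard_pair (by revert a; decide)]

lemma c5_dec1 : ∀ a b c : ZMod 5, a ≠ b → a ≠ c → b ≠ c → ¬(b = a + 1 ∨ b = a + 4) →
    ¬(c = a + 1 ∨ c = a + 4) → ¬(c = b + 1 ∨ c = b + 4) → False := by decide

lemma c5_dec2 : ∀ a b c : ZMod 5, a ≠ b → a ≠ c → b ≠ c → (b = a + 1 ∨ b = a + 4) →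
    (c = a + 1 ∨ c = a + 4) → (c = b + 1 ∨ c = b + 4) → False := by decide

lemma c5_dec3 : ∀ c u : ZMod 5, (¬(u = c ∨ u = c + 1)) ↔ (u = c + 3 ∨ u = c + 3 + 1 ∨ u = c + 3 + 4) := by decide

lemma c5_dec4 : ∀ a u : ZMod 5, (u = a ∨ u = a + 4) ↔ (u = a + 4 ∨ u = a + 4 + 1) := by decide

lemma c5_indep_le (s : Set (ZMod 5)) (hs : IsIndep C5 s) : s.ncard ≤ 2 := by
  by_contra h
  push_neg at h
  obtain ⟨t, hts, htc⟩ := Set.exists_subset_card_eq (show 3 ≤ s.ncard from h)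
  obtain ⟨a, b, c, hab, hac, hbc, rfl⟩ := Set.ncard_eq_three.1 htc
  have h1 := hs a (hts (by simp)) b (hts (by simp))
  have h2 := hs a (hts (by simp)) c (hts (by simp))
  have h3 := hs b (hts (by simp)) c (hts (by simp))
  rw [c5_adj'] at h1 h2 h3
  exact c5_dec1 a b c hab hac hbc h1 h2 h3

lemma c5_alpha : _root_.indepNum C5 = 2 := by
  apply le_antisymm
  · exact indepNum_le c5_indep_le
  · have h : IsIndep C5 {0, 2} := by
      intro a ha b hb
      simp only [Set.mem_insert_iff, Set.mem_singleton_iff] at ha hb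
      rw [c5_adj']
      rcases ha with rfl | rfl <;> rcases hb with rfl | rfl <;> decide
    have := le_indepNum h
    rwa [Set.ncard_pair (by decide)] at this

lemma c5_good : ∀ S : Set (ZMod 5), Destab C5 S →
    3 ≤ S.ncard ∧ (S.ncard = 3 → ∃ u, deg C5 u = 2 ∧ S = closedNbhd C5 u) := by
  intro S hS
  have hcl : ∀ a ∈ Sᶜ, ∀ b ∈ Sᶜ, a ≠ b → C5.Adj a b := by
    intro a ha b hb hab
    by_contra hnadj
    have hind : IsIndep C5 {a, b} := by
      intro p hp q hq
      simp only [Set.mem_insert_iff, Set.mem_singleton_iff] at hp hq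
      rcases hp with hp | hp <;> rcases hq with hq | hq <;> subst hp <;> subst hq
      · exact fun h => (C5.loopless.irrefl _) h
      · exact hnadj
      · exact fun h => hnadj h.symm
      · exact fun h => (C5.loopless.irrefl _) h
    have hsub : ({a, b} : Set (ZMod 5)) ⊆ Sᶜ := by
      intro u hu; rcases hu with rfl | hu
      · exact ha
      · rw [Set.mem_singleton_iff] at hu; subst hu; exact hb
    have := hS.bound hsub hind
    rw [Set.ncard_pair hab, c5_alpha] at this
    omega
  have hSc : Sᶜ.ncard ≤ 2 := by
    by_contra h
    push_neg at h
    obtain ⟨t, hts, htc⟩ := Set.exists_subset_card_eq (show 3 ≤ Sᶜ.ncard from h)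
    obtain ⟨a, b, c, hab, hac, hbc, rfl⟩ := Set.ncard_eq_three.1 htc
    have h1 := hcl a (hts (by simp)) b (hts (by simp)) hab
    have h2 := hcl a (hts (by simp)) c (hts (by simp)) hac
    have h3 := hcl b (hts (by simp)) c (hts (by simp)) hbc
    rw [c5_adj'] at h1 h2 h3
    exact c5_dec2 a b c hab hac hbc h1 h2 h3
  have hsum : S.ncard + Sᶜ.ncard = 5 := by
    have := Set.ncard_add_ncard_compl S
    simpa using this
  refine ⟨by omega, fun h3 => ?_⟩
  have h2 : Sᶜ.ncard = 2 := by omega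
  obtain ⟨a, b, hab, hcompl⟩ := Set.ncard_eq_two.1 h2
  have hadj : C5.Adj a b := hcl a (hcompl ▸ by simp) b (hcompl ▸ by simp) hab
  rw [c5_adj'] at hadj
  have key : ∃ c : ZMod 5, Sᶜ = {c, c + 1} := by
    rcases hadj with h | h
    · exact ⟨a, by rw [hcompl, h]⟩
    · refine ⟨b, ?_⟩
      rw [hcompl, h]
      ext u
      simp only [Set.mem_insert_iff, Set.mem_singleton_iff]
      exact c5_dec4 a u
  obtain ⟨c, hc⟩ := key
  refine ⟨c + 3, c5_deg _, ?_⟩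
  have : S = Sᶜᶜ := (compl_compl S).symm
  rw [this, hc]
  unfold closedNbhd
  rw [c5_nbhd]
  ext u
  simp only [Set.mem_compl_iff, Set.mem_insert_iff, Set.mem_singleton_iff]
  exact c5_dec3 c u
end c5
section good

/-- The strengthened induction invariant. -/
def Good {V : Type} (G : SimpleGraph V) : Prop :=
  (∀ S : Set V, Destab G S →
      3 ≤ S.ncard ∧ (S.ncard = 3 → ∃ u, deg G u = 2 ∧ S = closedNbhd G u))
  ∧ (∀ a b c : V, G.Adj a b → G.Adj a c → ¬ G.Adj b c)
  ∧ (∀ u : V, 2 ≤ deg G u)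
  ∧ (∀ u₁ u₂ : V, deg G u₁ = 2 → deg G u₂ = 2 →
      G.neighborSet u₁ = G.neighborSet u₂ → u₁ = u₂)

lemma c5_dec5 : ∀ a b c : ZMod 5, (b = a + 1 ∨ b = a + 4) → (c = a + 1 ∨ c = a + 4) →
    ¬ (c = b + 1 ∨ c = b + 4) := by decide

lemma c5_dec6 : ∀ u₁ u₂ : ZMod 5, (u₁ + 1 = u₂ + 1 ∨ u₁ + 1 = u₂ + 4) →
    (u₁ + 4 = u₂ + 1 ∨ u₁ + 4 = u₂ + 4) → u₁ = u₂ := by decide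

lemma good_c5 : Good C5 := by
  refine ⟨c5_good, ?_, ?_, ?_⟩
  · intro a b c hab hac
    rw [c5_adj'] at hab hac ⊢
    exact c5_dec5 a b c hab hac
  · intro u; rw [c5_deg]
  · intro u₁ u₂ _ _ hN
    have h1 : (u₁ + 1 : ZMod 5) ∈ C5.neighborSet u₂ := by
      rw [← hN, c5_nbhd]; simp
    have h2 : (u₁ + 4 : ZMod 5) ∈ C5.neighborSet u₂ := by
      rw [← hN, c5_nbhd]; simp
    rw [c5_nbhd] at h1 h2
    simp only [Set.mem_insert_iff, Set.mem_singleton_iff] at h1 h2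
    exact c5_dec6 u₁ u₂ h1 h2

lemma good_iso {V W : Type} [Finite V] [Finite W] {G : SimpleGraph V} {H : SimpleGraph W}
    (e : G ≃g H) (hH : Good H) : Good G := by
  obtain ⟨hd, ht, hm, htw⟩ := hH
  refine ⟨?_, ?_, ?_, ?_⟩
  · intro S hS
    have hS' : Destab H (e '' S) := (destab_iso e S).1 hS
    obtain ⟨h3, hchar⟩ := hd (e '' S) hS'
    rw [Set.ncard_image_of_injective _ e.injective] at h3 hchar
    refine ⟨h3, fun hc => ?_⟩
    obtain ⟨u', hu', hSu'⟩ := hchar hc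
    refine ⟨e.symm u', ?_, ?_⟩
    · have := deg_iso e (e.symm u')
      rw [e.apply_symm_apply] at this
      rw [← this]; exact hu' 
    · have h1 : closedNbhd H u' = closedNbhd H (e (e.symm u')) := by rw [e.apply_symm_apply]
      rw [h1, closedNbhd_iso e] at hSu'
      exact (Set.image_injective.2 e.injective) hSu'
  · intro a b c hab hac hbc
    exact ht (e a) (e b) (e c) (e.map_rel_iff.2 hab) (e.map_rel_iff.2 hac) (e.map_rel_iff.2 hbc)
  · intro u
    rw [← deg_iso e u]; exact hm (e u)
  · intro u₁ u₂ h1 h2 hN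
    have e1 : H.neighborSet (e u₁) = H.neighborSet (e u₂) := by
      rw [neighborSet_iso e, neighborSet_iso e, hN]
    have := htw (e u₁) (e u₂) (by rw [deg_iso]; exact h1) (by rw [deg_iso]; exact h2) e1
    exact e.injective this

end good
section stepsec
variable {α : Type} [Finite α]

lemma ncard_insert2 {t : Set α} {a b : α} (hab : a ≠ b) (ha : a ∉ t) (hb : b ∉ t) :
    (insert a (insert b t)).ncard = t.ncard + 2 := by
  rw [Set.ncard_insert_of_notMem (by simp [hab, ha]) (Set.toFinite _),
    Set.ncard_insert_of_notMem hb (Set.toFinite _)]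

lemma ncard_diff_singleton_ge {s : Set α} (x : α) : s.ncard - 1 ≤ (s \ {x}).ncard := by
  by_cases hx : x ∈ s
  · rw [Set.ncard_diff_singleton_of_mem hx]
  · rw [Set.diff_singleton_eq_self hx]; omega

lemma ncard_diff_pair_ge {s : Set α} {u x : α} (h : u ∉ s ∨ x ∉ s) :
    s.ncard - 1 ≤ (s \ ({u, x} : Set α)).ncard := by
  rcases h with h | h
  · have he : s \ ({u, x} : Set α) = s \ {x} := by
      ext a; simp only [Set.mem_diff, Set.mem_insert_iff, Set.mem_singleton_iff, not_or]
      exact ⟨fun ⟨h1, _, h3⟩ => ⟨h1, h3⟩, fun ⟨h1, h3⟩ => ⟨h1, fun he => h (he ▸ h1), h3⟩⟩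
    rw [he]; exact ncard_diff_singleton_ge x
  · have he : s \ ({u, x} : Set α) = s \ {u} := by
      ext a; simp only [Set.mem_diff, Set.mem_insert_iff, Set.mem_singleton_iff, not_or]
      exact ⟨fun ⟨h1, h2, _⟩ => ⟨h1, h2⟩, fun ⟨h1, h2⟩ => ⟨h1, h2, fun he => h (he ▸ h1)⟩⟩
    rw [he]; exact ncard_diff_singleton_ge u

end stepsec

section step
variable {V : Type} [Finite V]

lemma good_step (G : SimpleGraph V) (v w1 w2 x : V)
    (hvw1 : v ≠ w1) (hvw2 : v ≠ w2) (hw12 : w1 ≠ w2)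
    (hx : x ∉ ({v, w1, w2} : Set V))
    (hdeg : deg (G.induce ({v, w1, w2} : Set V)ᶜ) ⟨x, hx⟩ = 2)
    (hv : ∀ u, G.Adj v u ↔ u = w1 ∨ u = w2)
    (hw1 : ∀ u, G.Adj w1 u ↔ u = v ∨ u = x)
    (hw2 : ∀ u, G.Adj w2 u ↔ u = v ∨ (u ∉ ({v, w1, w2} : Set V) ∧ G.Adj x u))
    (IH : Good (G.induce ({v, w1, w2} : Set V)ᶜ)) : Good G := by
  classical
  obtain ⟨ihD, iht, ihm, ihtw⟩ := IH
  set A := ({v, w1, w2} : Set V)ᶜ with hAdef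
  have hmemA : ∀ u, u ∈ A ↔ (u ≠ v ∧ u ≠ w1 ∧ u ≠ w2) := by
    intro u; rw [hAdef]; simp [Set.mem_insert_iff, not_or]
  have hxs := hx
  simp only [Set.mem_insert_iff, Set.mem_singleton_iff, not_or] at hxs
  obtain ⟨hxv, hxw1, hxw2⟩ := hxs
  have hxA : x ∈ A := (hmemA x).2 ⟨hxv, hxw1, hxw2⟩
  have hvA : v ∉ A := fun h => ((hmemA v).1 h).1 rfl
  have hw1A : w1 ∉ A := fun h => ((hmemA w1).1 h).2.1 rfl
  have hw2A : w2 ∉ A := fun h => ((hmemA w2).1 h).2.2 rfl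
  -- basic adjacencies
  have gvw1 : G.Adj v w1 := (hv w1).2 (Or.inl rfl)
  have gvw2 : G.Adj v w2 := (hv w2).2 (Or.inr rfl)
  have gw1x : G.Adj w1 x := (hw1 x).2 (Or.inr rfl)
  have ngvx : ¬ G.Adj v x := by
    intro h; rcases (hv x).1 h with h' | h'
    · exact hxw1 h'
    · exact hxw2 h'
  have ngw1w2 : ¬ G.Adj w1 w2 := by
    intro h; rcases (hw1 w2).1 h with h' | h'
    · exact hvw2 h'.symm
    · exact hxw2 h'.symm
  have ngw2x : ¬ G.Adj w2 x := by
    intro h; rcases (hw2 x).1 h with h' | ⟨_, h'⟩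
    · exact hxv h'
    · exact G.loopless.irrefl x h'
  -- the two neighbours of x in the old graph
  have hNX2 : ((G.induce A).neighborSet ⟨x, hxA⟩).ncard = 2 := hdeg
  obtain ⟨Y1, Y2, hY12, hNX⟩ := Set.ncard_eq_two.1 hNX2
  have hy1A : (Y1 : V) ∈ A := Y1.2
  have hy2A : (Y2 : V) ∈ A := Y2.2
  have hy12 : (Y1 : V) ≠ (Y2 : V) := fun h => hY12 (Subtype.ext h)
  have gxy1 : G.Adj x Y1 := by
    have : Y1 ∈ (G.induce A).neighborSet ⟨x, hxA⟩ := by rw [hNX]; simp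
    exact this
  have gxy2 : G.Adj x Y2 := by
    have : Y2 ∈ (G.induce A).neighborSet ⟨x, hxA⟩ := by rw [hNX]; simp
    exact this
  -- full characterisation of x's neighbours
  have hxadj : ∀ u, G.Adj x u ↔ (u = w1 ∨ u = (Y1 : V) ∨ u = (Y2 : V)) := by
    intro u
    constructor
    · intro h
      by_cases huA : u ∈ A
      · have : (⟨u, huA⟩ : ↥A) ∈ (G.induce A).neighborSet ⟨x, hxA⟩ := h
        rw [hNX] at this
        rcases this with h' | h'
        · exact Or.inr (Or.inl (congrArg Subtype.val h'))
        · exact Or.inr (Or.inr (congrArg Subtype.val h'))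
      · have hu : u = v ∨ u = w1 ∨ u = w2 := by
          by_contra hc; push_neg at hc
          exact huA ((hmemA u).2 ⟨hc.1, hc.2.1, hc.2.2⟩)
        rcases hu with rfl | rfl | rfl
        · exact absurd h.symm ngvx
        · exact Or.inl rfl
        · exact absurd h.symm ngw2x
    · rintro (rfl | rfl | rfl)
      · exact gw1x.symm
      · exact gxy1
      · exact gxy2
  have hw2adj : ∀ u, G.Adj w2 u ↔ (u = v ∨ u = (Y1 : V) ∨ u = (Y2 : V)) := by
    intro u
    rw [hw2 u]
    constructor
    · intro h
      rcases h with h | ⟨huA, hadj⟩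
      · exact Or.inl h
      · rcases (hxadj u).1 hadj with h | h | h
        · exact absurd (show u ∈ ({v, w1, w2} : Set V) by rw [h]; simp) huA
        · exact Or.inr (Or.inl h)
        · exact Or.inr (Or.inr h)
    · rintro (rfl | rfl | rfl)
      · exact Or.inl rfl
      · exact Or.inr ⟨hy1A, gxy1⟩
      · exact Or.inr ⟨hy2A, gxy2⟩
  have gw2y1 : G.Adj w2 (Y1 : V) := (hw2adj _).2 (Or.inr (Or.inl rfl))
  have gw2y2 : G.Adj w2 (Y2 : V) := (hw2adj _).2 (Or.inr (Or.inr rfl))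
  have hvy1 : v ≠ (Y1 : V) := fun h => hvA (h ▸ hy1A)
  have hvy2 : v ≠ (Y2 : V) := fun h => hvA (h ▸ hy2A)
  have hw1y1 : w1 ≠ (Y1 : V) := fun h => hw1A (h ▸ hy1A)
  have hw1y2 : w1 ≠ (Y2 : V) := fun h => hw1A (h ▸ hy2A)
  have hw2y1 : w2 ≠ (Y1 : V) := fun h => hw2A (h ▸ hy1A)
  have hw2y2 : w2 ≠ (Y2 : V) := fun h => hw2A (h ▸ hy2A)
  have hxy1 : x ≠ (Y1 : V) := G.ne_of_adj gxy1
  have hxy2 : x ≠ (Y2 : V) := G.ne_of_adj gxy2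
  have Nv : G.neighborSet v = {w1, w2} := by
    ext u; rw [mem_neighborSet, hv]; simp
  have Nw1 : G.neighborSet w1 = {v, x} := by
    ext u; rw [mem_neighborSet, hw1]; simp
  have Nw2 : G.neighborSet w2 = {v, (Y1 : V), (Y2 : V)} := by
    ext u; rw [mem_neighborSet, hw2adj]; simp
  have Nx : G.neighborSet x = {w1, (Y1 : V), (Y2 : V)} := by
    ext u; rw [mem_neighborSet, hxadj]; simp
  have degv : deg G v = 2 := by rw [deg_def, Nv, Set.ncard_pair hw12]
  have degw1 : deg G w1 = 2 := by rw [deg_def, Nw1, Set.ncard_pair (fun h => hxv h.symm)]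
  have degw2 : deg G w2 = 3 := by
    rw [deg_def, Nw2, Set.ncard_insert_of_notMem (by simp [hvy1, hvy2]) (Set.toFinite _),
      Set.ncard_pair hy12]
  have degx : deg G x = 3 := by
    rw [deg_def, Nx, Set.ncard_insert_of_notMem (by simp [hw1y1, hw1y2]) (Set.toFinite _),
      Set.ncard_pair hy12]
  have hpair2 : ({(Y1 : V), (Y2 : V)} : Set V).ncard = 2 := Set.ncard_pair hy12
  set α' := _root_.indepNum (G.induce A) with ha'def
  have himgpre : ∀ U : Set V, U ⊆ A → Subtype.val '' (Subtype.val ⁻¹' U : Set ↥A) = U := by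
    intro U hU
    rw [Subtype.image_preimage_coe]
    exact Set.ext fun a => ⟨fun h => h.2, fun h => ⟨hU h, h⟩⟩
  have ncard_pre : ∀ U : Set V, U ⊆ A → (Subtype.val ⁻¹' U : Set ↥A).ncard = U.ncard := by
    intro U hU
    conv_rhs => rw [← himgpre U hU]
    rw [Set.ncard_image_of_injective _ Subtype.val_injective]
  have nodestab : ∀ U : Set V, U ⊆ A → U.ncard ≤ 2 →
      ∃ s : Set V, s ⊆ A ∧ (∀ a ∈ s, a ∉ U) ∧ IsIndep G s ∧ α' ≤ s.ncard := by
    intro U hU hc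
    have hnd : ¬ Destab (G.induce A) (Subtype.val ⁻¹' U) := by
      intro hd
      have := (ihD _ hd).1
      rw [ncard_pre U hU] at this; omega
    obtain ⟨s', hs1, hs2, hs3⟩ := exists_max_indep_avoiding hnd
    refine ⟨Subtype.val '' s', ?_, ?_, ?_, ?_⟩
    · rintro a ⟨a', -, rfl⟩; exact a'.2
    · rintro a ⟨a', ha', rfl⟩ hU'
      exact (hs1 ha') hU'
    · exact isIndep_induce_iff.1 hs2
    · rw [Set.ncard_image_of_injective _ Subtype.val_injective]; exact hs3
  have blocked : ∀ U : Set V, U ⊆ A →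
      (∀ s : Set V, s ⊆ A → (∀ a ∈ s, a ∉ U) → IsIndep G s → s.ncard < α') →
      3 ≤ U.ncard ∧ (U.ncard = 3 → ∃ u' : ↥A, deg (G.induce A) u' = 2 ∧
        U = insert (u' : V) (Subtype.val '' ((G.induce A).neighborSet u'))) := by
    intro U hU hblock
    have hd : Destab (G.induce A) (Subtype.val ⁻¹' U) := by
      apply destab_of
      intro s' hs1 hs2
      have := hblock (Subtype.val '' s') (by rintro a ⟨a', -, rfl⟩; exact a'.2)
        (by rintro a ⟨a', ha', rfl⟩ hU'; exact hs1 ha' hU')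
        (isIndep_induce_iff.1 hs2)
      rwa [Set.ncard_image_of_injective _ Subtype.val_injective] at this
    obtain ⟨h3, hchar⟩ := ihD _ hd
    rw [ncard_pre U hU] at h3 hchar
    refine ⟨h3, fun hc => ?_⟩
    obtain ⟨u', hdeg', hU'⟩ := hchar hc
    refine ⟨u', hdeg', ?_⟩
    rw [← himgpre U hU, hU']
    unfold closedNbhd
    rw [Set.image_insert_eq]
  have halpha : _root_.indepNum G = α' + 1 := by
    apply le_antisymm
    · apply indepNum_le
      intro I hI
      by_cases hw : w1 ∈ I ∧ w2 ∈ I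
      · obtain ⟨h1, h2⟩ := hw
        have hvI : v ∉ I := fun hvI => hI v hvI w1 h1 gvw1
        have hxI : x ∉ I := fun hxI => hI w1 h1 x hxI gw1x
        have hy1I : (Y1 : V) ∉ I := fun hyI => hI w2 h2 (Y1 : V) hyI gw2y1
        have hy2I : (Y2 : V) ∉ I := fun hyI => hI w2 h2 (Y2 : V) hyI gw2y2
        have hI'A : insert x (I \ ({w1, w2} : Set V)) ⊆ A := by
          intro a ha
          rcases Set.mem_insert_iff.1 ha with rfl | ⟨haI, hanot⟩
          · exact hxA
          · simp only [Set.mem_insert_iff, Set.mem_singleton_iff, not_or] at hanot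
            exact (hmemA a).2 ⟨fun h => hvI (h ▸ haI), hanot.1, hanot.2⟩
        have hI'ind : IsIndep G (insert x (I \ ({w1, w2} : Set V))) := by
          apply indep_insert (hI.mono Set.diff_subset)
          intro b hb hadj
          obtain ⟨hbI, hbnot⟩ := hb
          simp only [Set.mem_insert_iff, Set.mem_singleton_iff, not_or] at hbnot
          rcases (hxadj b).1 hadj with rfl | rfl | rfl
          · exact hbnot.1 rfl
          · exact hy1I hbI
          · exact hy2I hbI
        have hxnd : x ∉ I \ ({w1, w2} : Set V) := fun h => hxI h.1
        have hc1 : (insert x (I \ ({w1, w2} : Set V))).ncard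
            = (I \ ({w1, w2} : Set V)).ncard + 1 :=
          Set.ncard_insert_of_notMem hxnd (Set.toFinite _)
        have hsub12 : ({w1, w2} : Set V) ⊆ I := by
          intro a ha
          rcases Set.mem_insert_iff.1 ha with rfl | ha
          · exact h1
          · rw [Set.mem_singleton_iff] at ha; exact ha ▸ h2
        have hc2 : (I \ ({w1, w2} : Set V)).ncard = I.ncard - 2 := by
          rw [Set.ncard_diff hsub12 (Set.toFinite _), Set.ncard_pair hw12]
        have h2le : 2 ≤ I.ncard := by
          have := Set.ncard_le_ncard hsub12 (Set.toFinite _)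
          rwa [Set.ncard_pair hw12] at this
        have hfin := le_indepNum_induce hI'A hI'ind
        omega
      · have hone : (I ∩ ({v, w1, w2} : Set V)).ncard ≤ 1 := by
          have hsub : (I ∩ ({v, w1, w2} : Set V)).ncard ≤ ({v} : Set V).ncard ∨
              (I ∩ ({v, w1, w2} : Set V)).ncard ≤ ({w1} : Set V).ncard ∨
              (I ∩ ({v, w1, w2} : Set V)).ncard ≤ ({w2} : Set V).ncard := by
            by_cases hvI : v ∈ I
            · left
              apply Set.ncard_le_ncard _ (Set.toFinite _)
              rintro a ⟨haI, haD⟩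
              rcases haD with rfl | haD
              · rfl
              rcases haD with rfl | haD
              · exact absurd (hI v hvI a haI) (fun hn => hn gvw1)
              · rw [Set.mem_singleton_iff] at haD; subst haD
                exact absurd (hI v hvI a haI) (fun hn => hn gvw2)
            · by_cases hw1I : w1 ∈ I
              · right; left
                apply Set.ncard_le_ncard _ (Set.toFinite _)
                rintro a ⟨haI, haD⟩
                rcases haD with rfl | haD
                · exact absurd haI hvI
                rcases haD with rfl | haD
                · rfl
                · rw [Set.mem_singleton_iff] at haD; subst haD
                  exact absurd ⟨hw1I, haI⟩ hw
              · right; right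
                apply Set.ncard_le_ncard _ (Set.toFinite _)
                rintro a ⟨haI, haD⟩
                rcases haD with rfl | haD
                · exact absurd haI hvI
                rcases haD with rfl | haD
                · exact absurd haI hw1I
                · exact haD
          simpa using hsub
        have hIsplit := Set.ncard_inter_add_ncard_diff_eq_ncard I ({v, w1, w2} : Set V)
        have hsubA : I \ ({v, w1, w2} : Set V) ⊆ A := fun a ha => ha.2
        have hfin := le_indepNum_induce hsubA (hI.mono Set.diff_subset)
        omega
    · obtain ⟨s, hsub, hind, hcard⟩ := exists_indep_subset_card G A
      have hvs : v ∉ s := fun h => hvA (hsub h)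
      have hins : IsIndep G (insert v s) := by
        apply indep_insert hind
        intro b hb hadj
        rcases (hv b).1 hadj with rfl | rfl
        · exact hw1A (hsub hb)
        · exact hw2A (hsub hb)
      have hle := le_indepNum hins
      rwa [Set.ncard_insert_of_notMem hvs (Set.toFinite _), hcard] at hle
  -- main analysis of small destabilisers
  have hkey : ∀ S : Set V, Destab G S → S.ncard ≤ 3 →
      ∃ u, deg G u = 2 ∧ S = closedNbhd G u ∧ S.ncard = 3 := by
    intro S hS hS3
    by_cases hvS : v ∈ S
    · by_cases hw1S : w1 ∈ S
      · by_cases hw2S : w2 ∈ S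
        · -- case δ : S = N[v]
          have hsub : ({v, w1, w2} : Set V) ⊆ S := by
            intro a ha
            rcases ha with rfl | ha
            · exact hvS
            rcases ha with rfl | ha
            · exact hw1S
            · rw [Set.mem_singleton_iff] at ha; exact ha ▸ hw2S
          have h3 : ({v, w1, w2} : Set V).ncard = 3 := by
            rw [Set.ncard_insert_of_notMem (by simp [hvw1, hvw2]) (Set.toFinite _),
              Set.ncard_pair hw12]
          have hSeq : ({v, w1, w2} : Set V) = S :=
            Set.eq_of_subset_of_ncard_le hsub (by omega) (Set.toFinite _)
          refine ⟨v, degv, ?_, by rw [← hSeq]; exact h3⟩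
          rw [← hSeq]; unfold closedNbhd; rw [Nv]
        · -- case β : w1 ∈ S, w2 ∉ S ; conclude S = N[w1]
          have hUcard : (S ∩ A).ncard ≤ 1 := by
            have hs1 : S ∩ A ⊆ S \ ({v, w1} : Set V) := by
              rintro a ⟨haS, haA⟩
              refine ⟨haS, ?_⟩
              rintro (rfl | h)
              · exact hvA haA
              · rw [Set.mem_singleton_iff] at h; exact hw1A (h ▸ haA)
            have hs2 := Set.ncard_le_ncard hs1 (Set.toFinite _)
            have hsub2 : ({v, w1} : Set V) ⊆ S := by
              intro a ha
              rcases ha with rfl | ha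
              · exact hvS
              · rw [Set.mem_singleton_iff] at ha; exact ha ▸ hw1S
            have hs3 : (S \ ({v, w1} : Set V)).ncard = S.ncard - 2 := by
              rw [Set.ncard_diff hsub2 (Set.toFinite _), Set.ncard_pair hvw1]
            omega
          have hblock : ∀ s : Set V, s ⊆ A →
              (∀ a ∈ s, a ∉ insert (Y1 : V) (insert (Y2 : V) (S ∩ A))) → IsIndep G s →
              s.ncard < α' := by
            intro s hsA hsU hsInd
            by_contra hge
            push_neg at hge
            have hy1s : (Y1 : V) ∉ s := fun h => hsU _ h (Set.mem_insert _ _)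
            have hy2s : (Y2 : V) ∉ s := fun h =>
              hsU _ h (Set.mem_insert_of_mem _ (Set.mem_insert _ _))
            have hJind : IsIndep G (insert w2 s) := by
              apply indep_insert hsInd
              intro b hb hadj
              rcases (hw2adj b).1 hadj with rfl | rfl | rfl
              · exact hvA (hsA hb)
              · exact hy1s hb
              · exact hy2s hb
            have hJS : insert w2 s ⊆ Sᶜ := by
              intro a ha
              rcases Set.mem_insert_iff.1 ha with rfl | ha
              · exact hw2S
              · intro haS
                exact hsU a ha (Set.mem_insert_of_mem _ (Set.mem_insert_of_mem _ ⟨haS, hsA ha⟩))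
            have hw2ns : w2 ∉ s := fun h => hw2A (hsA h)
            have hbd := hS.bound hJS hJind
            rw [Set.ncard_insert_of_notMem hw2ns (Set.toFinite _), halpha] at hbd
            omega
          have hUsubA : insert (Y1 : V) (insert (Y2 : V) (S ∩ A)) ⊆ A := by
            intro a ha
            rcases Set.mem_insert_iff.1 ha with rfl | ha
            · exact hy1A
            rcases Set.mem_insert_iff.1 ha with rfl | ha
            · exact hy2A
            · exact ha.2
          obtain ⟨hU3, hUchar⟩ := blocked _ hUsubA hblock
          have hUle : (insert (Y1 : V) (insert (Y2 : V) (S ∩ A))).ncard ≤ 3 := by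
            have i1 := Set.ncard_insert_le (Y1 : V) (insert (Y2 : V) (S ∩ A))
            have i2 := Set.ncard_insert_le (Y2 : V) (S ∩ A)
            omega
          have hU3' : (insert (Y1 : V) (insert (Y2 : V) (S ∩ A))).ncard = 3 := by omega
          have hpair2 : ({(Y1 : V), (Y2 : V)} : Set V).ncard = 2 := Set.ncard_pair hy12
          obtain ⟨u', hdeg', hU'⟩ := hUchar (by omega)
          have hu'mem : (u' : V) ∈ insert (Y1 : V) (insert (Y2 : V) (S ∩ A)) := by
            rw [hU']; exact Set.mem_insert _ _
          have htone : (S ∩ A).ncard = 1 := by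
            by_contra hne
            have h0 : (S ∩ A).ncard = 0 := by omega
            have hemp : S ∩ A = ∅ := (Set.ncard_eq_zero (Set.toFinite _)).1 h0
            have hsub : insert (Y1 : V) (insert (Y2 : V) (S ∩ A)) ⊆ {(Y1 : V), (Y2 : V)} := by
              rw [hemp]
              intro a ha
              rcases Set.mem_insert_iff.1 ha with rfl | ha
              · exact Set.mem_insert _ _
              rcases Set.mem_insert_iff.1 ha with rfl | ha
              · exact Set.mem_insert_iff.2 (Or.inr rfl)
              · exact absurd ha (Set.notMem_empty a)
            have := Set.ncard_le_ncard hsub (Set.toFinite _)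
            omega
          obtain ⟨t, ht⟩ := Set.ncard_eq_one.1 htone
          have hty1 : t ≠ (Y1 : V) := by
            intro h
            have hsub : insert (Y1 : V) (insert (Y2 : V) (S ∩ A)) ⊆ {(Y1 : V), (Y2 : V)} := by
              rw [ht, h]
              intro a ha
              rcases Set.mem_insert_iff.1 ha with rfl | ha
              · exact Set.mem_insert _ _
              rcases Set.mem_insert_iff.1 ha with rfl | ha
              · exact Set.mem_insert_iff.2 (Or.inr rfl)
              · rw [Set.mem_singleton_iff] at ha
                exact Set.mem_insert_iff.2 (Or.inl ha)
            have := Set.ncard_le_ncard hsub (Set.toFinite _)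
            omega
          have hty2 : t ≠ (Y2 : V) := by
            intro h
            have hsub : insert (Y1 : V) (insert (Y2 : V) (S ∩ A)) ⊆ {(Y1 : V), (Y2 : V)} := by
              rw [ht, h]
              intro a ha
              rcases Set.mem_insert_iff.1 ha with rfl | ha
              · exact Set.mem_insert _ _
              rcases Set.mem_insert_iff.1 ha with rfl | ha
              · exact Set.mem_insert_iff.2 (Or.inr rfl)
              · rw [Set.mem_singleton_iff] at ha
                exact Set.mem_insert_iff.2 (Or.inr ha)
            have := Set.ncard_le_ncard hsub (Set.toFinite _)
            omega
          have hyy : ¬ (G.induce A).Adj Y1 Y2 := iht ⟨x, hxA⟩ Y1 Y2 gxy1 gxy2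
          have hdegX : deg (G.induce A) ⟨x, hxA⟩ = 2 := hdeg
          have htx : t = x := by
            rcases Set.mem_insert_iff.1 hu'mem with he | he
            · exfalso
              have hu'Y1 : u' = Y1 := Subtype.ext he
              have hy2U : (Y2 : V) ∈ insert (u' : V)
                  (Subtype.val '' ((G.induce A).neighborSet u')) := by
                rw [← hU']; exact Set.mem_insert_of_mem _ (Set.mem_insert _ _)
              rcases Set.mem_insert_iff.1 hy2U with he2 | he2
              · exact hy12 (he ▸ he2.symm)
              · obtain ⟨b', hb', hbe⟩ := he2
                have hbY2 : b' = Y2 := Subtype.ext hbe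
                subst hbY2
                rw [hu'Y1] at hb'
                exact hyy hb'
            rcases Set.mem_insert_iff.1 he with he | he
            · exfalso
              have hu'Y2 : u' = Y2 := Subtype.ext he
              have hy1U : (Y1 : V) ∈ insert (u' : V)
                  (Subtype.val '' ((G.induce A).neighborSet u')) := by
                rw [← hU']; exact Set.mem_insert _ _
              rcases Set.mem_insert_iff.1 hy1U with he2 | he2
              · exact hy12 (he2.trans he)
              · obtain ⟨b', hb', hbe⟩ := he2
                have hbY1 : b' = Y1 := Subtype.ext hbe
                subst hbY1
                rw [hu'Y2] at hb'
                exact hyy hb'.symm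
            · rw [ht, Set.mem_singleton_iff] at he
              have hY1N : Y1 ∈ (G.induce A).neighborSet u' := by
                have hy1U : (Y1 : V) ∈ insert (u' : V)
                    (Subtype.val '' ((G.induce A).neighborSet u')) := by
                  rw [← hU']; exact Set.mem_insert _ _
                rcases Set.mem_insert_iff.1 hy1U with he2 | he2
                · exact absurd (he2.trans he).symm hty1
                · obtain ⟨b', hb', hbe⟩ := he2
                  exact (Subtype.ext hbe : b' = Y1) ▸ hb'
              have hY2N : Y2 ∈ (G.induce A).neighborSet u' := by
                have hy2U : (Y2 : V) ∈ insert (u' : V)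
                    (Subtype.val '' ((G.induce A).neighborSet u')) := by
                  rw [← hU']; exact Set.mem_insert_of_mem _ (Set.mem_insert _ _)
                rcases Set.mem_insert_iff.1 hy2U with he2 | he2
                · exact absurd (he2.trans he).symm hty2
                · obtain ⟨b', hb', hbe⟩ := he2
                  exact (Subtype.ext hbe : b' = Y2) ▸ hb'
              have hNsub : ({Y1, Y2} : Set ↥A) ⊆ (G.induce A).neighborSet u' := by
                intro b hb
                rcases Set.mem_insert_iff.1 hb with rfl | hb
                · exact hY1N
                · rw [Set.mem_singleton_iff] at hb; exact hb ▸ hY2N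
              have hNcard : ((G.induce A).neighborSet u').ncard ≤ ({Y1, Y2} : Set ↥A).ncard := by
                rw [Set.ncard_pair hY12]
                exact le_of_eq hdeg'
              have hNeq : ({Y1, Y2} : Set ↥A) = (G.induce A).neighborSet u' :=
                Set.eq_of_subset_of_ncard_le hNsub hNcard (Set.toFinite _)
              have hu'X : u' = ⟨x, hxA⟩ := ihtw u' ⟨x, hxA⟩ hdeg' hdegX (by rw [← hNeq, hNX])
              rw [← he, hu'X]
          have hxSA : S ∩ A = {x} := by rw [ht, htx]
          have hSeq : S = {v, w1, x} := by
            ext a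
            constructor
            · intro haS
              by_cases haA : a ∈ A
              · have hmem : a ∈ S ∩ A := ⟨haS, haA⟩
                rw [hxSA, Set.mem_singleton_iff] at hmem
                exact Set.mem_insert_iff.2 (Or.inr (Set.mem_insert_iff.2 (Or.inr hmem)))
              · have haD : a ∈ ({v, w1, w2} : Set V) := by
                  by_contra h'; exact haA h'
                rcases haD with rfl | haD
                · exact Set.mem_insert _ _
                rcases haD with rfl | haD
                · exact Set.mem_insert_iff.2 (Or.inr (Set.mem_insert _ _))
                · rw [Set.mem_singleton_iff] at haD
                  exact absurd (haD ▸ haS) hw2S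
            · intro ha
              rcases Set.mem_insert_iff.1 ha with rfl | ha
              · exact hvS
              rcases Set.mem_insert_iff.1 ha with rfl | ha
              · exact hw1S
              · rw [Set.mem_singleton_iff] at ha
                subst ha
                have hmem : a ∈ S ∩ A := by rw [hxSA]; exact rfl
                exact hmem.1
          refine ⟨w1, degw1, ?_, ?_⟩
          · rw [hSeq]
            unfold closedNbhd
            rw [Nw1]
            ext a
            simp only [Set.mem_insert_iff, Set.mem_singleton_iff]
            tauto
          · rw [hSeq]
            rw [Set.ncard_insert_of_notMem (by
                simp only [Set.mem_insert_iff, Set.mem_singleton_iff]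
                push_neg
                exact ⟨hvw1, fun h => hxv h.symm⟩) (Set.toFinite _),
              Set.ncard_pair (fun h => hxw1 h.symm)]
      · by_cases hw2S : w2 ∈ S
        · -- case γ : impossible
          exfalso
          have hUcard : (S ∩ A).ncard ≤ 1 := by
            have hs1 : S ∩ A ⊆ S \ ({v, w2} : Set V) := by
              rintro a ⟨haS, haA⟩
              refine ⟨haS, ?_⟩
              rintro (rfl | h)
              · exact hvA haA
              · rw [Set.mem_singleton_iff] at h; exact hw2A (h ▸ haA)
            have hs2 := Set.ncard_le_ncard hs1 (Set.toFinite _)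
            have hsub2 : ({v, w2} : Set V) ⊆ S := by
              intro a ha
              rcases ha with rfl | ha
              · exact hvS
              · rw [Set.mem_singleton_iff] at ha; exact ha ▸ hw2S
            have hs3 : (S \ ({v, w2} : Set V)).ncard = S.ncard - 2 := by
              rw [Set.ncard_diff hsub2 (Set.toFinite _), Set.ncard_pair hvw2]
            omega
          have hblock : ∀ s : Set V, s ⊆ A →
              (∀ a ∈ s, a ∉ insert x (S ∩ A)) → IsIndep G s → s.ncard < α' := by
            intro s hsA hsU hsInd
            by_contra hge
            push_neg at hge
            have hxns : x ∉ s := fun h => hsU x h (Set.mem_insert _ _)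
            have hJind : IsIndep G (insert w1 s) := by
              apply indep_insert hsInd
              intro b hb hadj
              rcases (hw1 b).1 hadj with rfl | rfl
              · exact hvA (hsA hb)
              · exact hxns hb
            have hJS : insert w1 s ⊆ Sᶜ := by
              intro a ha
              rcases Set.mem_insert_iff.1 ha with rfl | ha
              · exact hw1S
              · intro haS
                exact hsU a ha (Set.mem_insert_of_mem _ ⟨haS, hsA ha⟩)
            have hw1ns : w1 ∉ s := fun h => hw1A (hsA h)
            have hbd := hS.bound hJS hJind
            rw [Set.ncard_insert_of_notMem hw1ns (Set.toFinite _), halpha] at hbd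
            omega
          have hUsubA : insert x (S ∩ A) ⊆ A := by
            intro a ha
            rcases Set.mem_insert_iff.1 ha with rfl | ha
            · exact hxA
            · exact ha.2
          have h3U := (blocked _ hUsubA hblock).1
          have := Set.ncard_insert_le x (S ∩ A)
          omega
        · -- case α : impossible
          exfalso
          have hUcard : (S ∩ A).ncard ≤ 2 := by
            have hs1 : S ∩ A ⊆ S \ ({v} : Set V) := by
              rintro a ⟨haS, haA⟩
              exact ⟨haS, fun h => hvA (h ▸ haA)⟩
            have hs2 := Set.ncard_le_ncard hs1 (Set.toFinite _)
            have hs3 : (S \ ({v} : Set V)).ncard = S.ncard - 1 :=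
              Set.ncard_diff_singleton_of_mem hvS
            omega
          obtain ⟨s, hsA, hsU, hsInd, hsCard⟩ := nodestab (S ∩ A) Set.inter_subset_right hUcard
          have hsS : ∀ a ∈ s, a ∉ S := fun a ha haS => hsU a ha ⟨haS, hsA ha⟩
          by_cases hxs : x ∈ s
          · have hy1s : (Y1 : V) ∉ s := fun h => hsInd x hxs _ h gxy1
            have hy2s : (Y2 : V) ∉ s := fun h => hsInd x hxs _ h gxy2
            have hJind : IsIndep G (insert w2 s) := by
              apply indep_insert hsInd
              intro b hb hadj
              rcases (hw2adj b).1 hadj with rfl | rfl | rfl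
              · exact hvA (hsA hb)
              · exact hy1s hb
              · exact hy2s hb
            have hJS : insert w2 s ⊆ Sᶜ := by
              intro a ha
              rcases Set.mem_insert_iff.1 ha with rfl | ha
              · exact hw2S
              · exact hsS a ha
            have hw2ns : w2 ∉ s := fun h => hw2A (hsA h)
            have hbd := hS.bound hJS hJind
            rw [Set.ncard_insert_of_notMem hw2ns (Set.toFinite _), halpha] at hbd
            omega
          · have hJind : IsIndep G (insert w1 s) := by
              apply indep_insert hsInd
              intro b hb hadj
              rcases (hw1 b).1 hadj with rfl | rfl
              · exact hvA (hsA hb)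
              · exact hxs hb
            have hJS : insert w1 s ⊆ Sᶜ := by
              intro a ha
              rcases Set.mem_insert_iff.1 ha with rfl | ha
              · exact hw1S
              · exact hsS a ha
            have hw1ns : w1 ∉ s := fun h => hw1A (hsA h)
            have hbd := hS.bound hJS hJind
            rw [Set.ncard_insert_of_notMem hw1ns (Set.toFinite _), halpha] at hbd
            omega
    · -- v ∉ S
      have hTd : Destab (G.induce A) (Subtype.val ⁻¹' S) := by
        apply destab_of
        intro s' hs1 hs2
        have hJind : IsIndep G (insert v (Subtype.val '' s')) := by
          apply indep_insert (isIndep_induce_iff.1 hs2)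
          rintro b ⟨b', -, rfl⟩ hadj
          rcases (hv _).1 hadj with h | h
          · exact hw1A (h ▸ b'.2)
          · exact hw2A (h ▸ b'.2)
        have hJS : insert v (Subtype.val '' s') ⊆ Sᶜ := by
          intro a ha
          rcases Set.mem_insert_iff.1 ha with rfl | ha
          · exact hvS
          · obtain ⟨a', ha', rfl⟩ := ha
            exact hs1 ha'
        have hbd := hS.bound hJS hJind
        have hvns : v ∉ Subtype.val '' s' := by
          rintro ⟨a', -, h⟩; exact hvA (h ▸ a'.2)
        rw [Set.ncard_insert_of_notMem hvns (Set.toFinite _), halpha,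
          Set.ncard_image_of_injective _ Subtype.val_injective] at hbd
        show s'.ncard < α'
        omega
      obtain ⟨h3T, hcharT⟩ := ihD _ hTd
      have hpreeq : (Subtype.val ⁻¹' S : Set ↥A) = (Subtype.val ⁻¹' (S ∩ A) : Set ↥A) := by
        ext a; exact ⟨fun h => ⟨h, a.2⟩, fun h => h.1⟩
      have hpre : (Subtype.val ⁻¹' S : Set ↥A).ncard = (S ∩ A).ncard := by
        rw [hpreeq]; exact ncard_pre _ Set.inter_subset_right
      rw [hpre] at h3T hcharT
      have hSA3 : 3 ≤ S.ncard :=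
        le_trans h3T (Set.ncard_le_ncard Set.inter_subset_left (Set.toFinite _))
      have hS3' : S.ncard = 3 := le_antisymm hS3 hSA3
      have hSAeq : S ∩ A = S :=
        Set.eq_of_subset_of_ncard_le Set.inter_subset_left (by omega) (Set.toFinite _)
      have hSsubA : S ⊆ A := by
        intro a ha
        rw [← hSAeq] at ha
        exact ha.2
      have hup : (S ∩ A).ncard ≤ S.ncard :=
        Set.ncard_le_ncard Set.inter_subset_left (Set.toFinite _)
      obtain ⟨u', hdeg', hSu'⟩ := hcharT (by omega)
      have hSeq : S = insert (u' : V) (Subtype.val '' ((G.induce A).neighborSet u')) := by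
        have h1 : Subtype.val '' (Subtype.val ⁻¹' S : Set ↥A) = S := himgpre S hSsubA
        rw [← h1, hSu']
        unfold closedNbhd
        rw [Set.image_insert_eq]
      by_cases hux : (u' : V) = x
      · exfalso
        have hu'X : u' = (⟨x, hxA⟩ : ↥A) := Subtype.ext hux
        have hNval : Subtype.val '' ((G.induce A).neighborSet u') = {(Y1 : V), (Y2 : V)} := by
          rw [hu'X, hNX, Set.image_insert_eq, Set.image_singleton]
        have hSxy : S = insert x ({(Y1 : V), (Y2 : V)} : Set V) := by
          rw [hSeq, hNval, hux]
        obtain ⟨s, hsA, hsU, hsInd, hsCard⟩ := nodestab {(Y1 : V), (Y2 : V)}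
          (by
            intro a ha
            rcases Set.mem_insert_iff.1 ha with rfl | ha
            · exact hy1A
            · rw [Set.mem_singleton_iff] at ha; exact ha ▸ hy2A)
          (by rw [hpair2])
        have hy1s : (Y1 : V) ∉ s := fun h => hsU _ h (Set.mem_insert _ _)
        have hy2s : (Y2 : V) ∉ s := fun h => hsU _ h (Set.mem_insert_iff.2 (Or.inr rfl))
        have hJ2 : IsIndep G (insert w2 (s \ ({x} : Set V))) := by
          apply indep_insert (hsInd.mono Set.diff_subset)
          intro b hb hadj
          rcases (hw2adj b).1 hadj with rfl | rfl | rfl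
          · exact hvA (hsA hb.1)
          · exact hy1s hb.1
          · exact hy2s hb.1
        have hJind : IsIndep G (insert w1 (insert w2 (s \ ({x} : Set V)))) := by
          apply indep_insert hJ2
          intro b hb hadj
          rcases (hw1 b).1 hadj with rfl | rfl
          · rcases Set.mem_insert_iff.1 hb with h2 | h2
            · exact hvw2 h2
            · exact hvA (hsA h2.1)
          · rcases Set.mem_insert_iff.1 hb with h2 | h2
            · exact hxw2 h2
            · exact h2.2 rfl
        have hJS : insert w1 (insert w2 (s \ ({x} : Set V))) ⊆ Sᶜ := by
          intro a ha haS
          rcases Set.mem_insert_iff.1 ha with rfl | ha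
          · exact hw1A (hSsubA haS)
          rcases Set.mem_insert_iff.1 ha with rfl | ha
          · exact hw2A (hSsubA haS)
          · rw [hSxy] at haS
            rcases Set.mem_insert_iff.1 haS with h2 | h2
            · exact ha.2 h2
            rcases Set.mem_insert_iff.1 h2 with h2 | h2
            · exact hy1s (h2 ▸ ha.1)
            · rw [Set.mem_singleton_iff] at h2
              exact hy2s (h2 ▸ ha.1)
        have hcJ := ncard_insert2 (t := s \ ({x} : Set V)) hw12
          (fun h => hw1A (hsA h.1)) (fun h => hw2A (hsA h.1))
        have hdiff := ncard_diff_singleton_ge (s := s) x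
        have hbd := hS.bound hJS hJind
        rw [hcJ, halpha] at hbd
        omega
      · by_cases huadj : G.Adj x (u' : V)
        · exfalso
          have hu'N : u' ∈ (G.induce A).neighborSet ⟨x, hxA⟩ := huadj
          rw [hNX] at hu'N
          rcases Set.mem_insert_iff.1 hu'N with hP | hP
          · -- u' = Y1
            obtain ⟨C1, C2, hC12, hNu'⟩ := Set.ncard_eq_two.1
              (hdeg' : ((G.induce A).neighborSet u').ncard = 2)
            have hXinN : (⟨x, hxA⟩ : ↥A) ∈ (G.induce A).neighborSet u' := huadj.symm
            have hZ : ∃ Z : ↥A, (G.induce A).neighborSet u' = {⟨x, hxA⟩, Z} := by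
              rw [hNu'] at hXinN
              rcases Set.mem_insert_iff.1 hXinN with hX | hX
              · exact ⟨C2, by rw [hNu', ← hX]⟩
              · rw [Set.mem_singleton_iff] at hX
                exact ⟨C1, by rw [hNu', ← hX, Set.pair_comm]⟩
            obtain ⟨Z, hNu'Z⟩ := hZ
            have hSval : S = insert (u' : V) ({x, (Z : V)} : Set V) := by
              rw [hSeq, hNu'Z, Set.image_insert_eq, Set.image_singleton]
            obtain ⟨s, hsA, hsU, hsInd, hsCard⟩ := nodestab {(Z : V), (Y2 : V)}
              (by
                intro a ha
                rcases Set.mem_insert_iff.1 ha with rfl | ha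
                · exact Z.2
                · rw [Set.mem_singleton_iff] at ha; exact ha ▸ Y2.2)
              (by
                have := Set.ncard_insert_le (Z : V) ({(Y2 : V)} : Set V)
                rw [Set.ncard_singleton] at this
                omega)
            have hzs : (Z : V) ∉ s := fun h => hsU _ h (Set.mem_insert _ _)
            have hqs : (Y2 : V) ∉ s := fun h => hsU _ h (Set.mem_insert_iff.2 (Or.inr rfl))
            have hJ2 : IsIndep G (insert w2 (s \ ({(u' : V), x} : Set V))) := by
              apply indep_insert (hsInd.mono Set.diff_subset)
              intro b hb hadj
              rcases (hw2adj b).1 hadj with rfl | rfl | rfl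
              · exact hvA (hsA hb.1)
              · exact hb.2 (by rw [hP]; exact Set.mem_insert _ _)
              · exact hqs hb.1
            have hJind : IsIndep G (insert w1 (insert w2 (s \ ({(u' : V), x} : Set V)))) := by
              apply indep_insert hJ2
              intro b hb hadj
              rcases (hw1 b).1 hadj with rfl | rfl
              · rcases Set.mem_insert_iff.1 hb with h2 | h2
                · exact hvw2 h2
                · exact hvA (hsA h2.1)
              · rcases Set.mem_insert_iff.1 hb with h2 | h2
                · exact hxw2 h2
                · exact h2.2 (Set.mem_insert_iff.2 (Or.inr rfl))
            have hJS : insert w1 (insert w2 (s \ ({(u' : V), x} : Set V))) ⊆ Sᶜ := by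
              intro a ha haS
              rcases Set.mem_insert_iff.1 ha with rfl | ha
              · exact hw1A (hSsubA haS)
              rcases Set.mem_insert_iff.1 ha with rfl | ha
              · exact hw2A (hSsubA haS)
              · rw [hSval] at haS
                rcases Set.mem_insert_iff.1 haS with h2 | h2
                · exact ha.2 (Set.mem_insert_iff.2 (Or.inl h2))
                rcases Set.mem_insert_iff.1 h2 with h2 | h2
                · exact ha.2 (Set.mem_insert_iff.2 (Or.inr (Set.mem_singleton_iff.2 h2)))
                · rw [Set.mem_singleton_iff] at h2
                  exact hzs (h2 ▸ ha.1)
            have hcJ := ncard_insert2 (t := s \ ({(u' : V), x} : Set V)) hw12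
              (fun h => hw1A (hsA h.1)) (fun h => hw2A (hsA h.1))
            have hdiff : s.ncard - 1 ≤ (s \ ({(u' : V), x} : Set V)).ncard := by
              apply ncard_diff_pair_ge
              by_cases hxs : x ∈ s
              · exact Or.inl (fun h => hsInd _ h _ hxs huadj.symm)
              · exact Or.inr hxs
            have hbd := hS.bound hJS hJind
            rw [hcJ, halpha] at hbd
            omega
          · rw [Set.mem_singleton_iff] at hP
            -- u' = Y2
            obtain ⟨C1, C2, hC12, hNu'⟩ := Set.ncard_eq_two.1
              (hdeg' : ((G.induce A).neighborSet u').ncard = 2)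
            have hXinN : (⟨x, hxA⟩ : ↥A) ∈ (G.induce A).neighborSet u' := huadj.symm
            have hZ : ∃ Z : ↥A, (G.induce A).neighborSet u' = {⟨x, hxA⟩, Z} := by
              rw [hNu'] at hXinN
              rcases Set.mem_insert_iff.1 hXinN with hX | hX
              · exact ⟨C2, by rw [hNu', ← hX]⟩
              · rw [Set.mem_singleton_iff] at hX
                exact ⟨C1, by rw [hNu', ← hX, Set.pair_comm]⟩
            obtain ⟨Z, hNu'Z⟩ := hZ
            have hSval : S = insert (u' : V) ({x, (Z : V)} : Set V) := by
              rw [hSeq, hNu'Z, Set.image_insert_eq, Set.image_singleton]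
            obtain ⟨s, hsA, hsU, hsInd, hsCard⟩ := nodestab {(Z : V), (Y1 : V)}
              (by
                intro a ha
                rcases Set.mem_insert_iff.1 ha with rfl | ha
                · exact Z.2
                · rw [Set.mem_singleton_iff] at ha; exact ha ▸ Y1.2)
              (by
                have := Set.ncard_insert_le (Z : V) ({(Y1 : V)} : Set V)
                rw [Set.ncard_singleton] at this
                omega)
            have hzs : (Z : V) ∉ s := fun h => hsU _ h (Set.mem_insert _ _)
            have hqs : (Y1 : V) ∉ s := fun h => hsU _ h (Set.mem_insert_iff.2 (Or.inr rfl))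
            have hJ2 : IsIndep G (insert w2 (s \ ({(u' : V), x} : Set V))) := by
              apply indep_insert (hsInd.mono Set.diff_subset)
              intro b hb hadj
              rcases (hw2adj b).1 hadj with rfl | rfl | rfl
              · exact hvA (hsA hb.1)
              · exact hqs hb.1
              · exact hb.2 (by rw [hP]; exact Set.mem_insert _ _)
            have hJind : IsIndep G (insert w1 (insert w2 (s \ ({(u' : V), x} : Set V)))) := by
              apply indep_insert hJ2
              intro b hb hadj
              rcases (hw1 b).1 hadj with rfl | rfl
              · rcases Set.mem_insert_iff.1 hb with h2 | h2
                · exact hvw2 h2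
                · exact hvA (hsA h2.1)
              · rcases Set.mem_insert_iff.1 hb with h2 | h2
                · exact hxw2 h2
                · exact h2.2 (Set.mem_insert_iff.2 (Or.inr rfl))
            have hJS : insert w1 (insert w2 (s \ ({(u' : V), x} : Set V))) ⊆ Sᶜ := by
              intro a ha haS
              rcases Set.mem_insert_iff.1 ha with rfl | ha
              · exact hw1A (hSsubA haS)
              rcases Set.mem_insert_iff.1 ha with rfl | ha
              · exact hw2A (hSsubA haS)
              · rw [hSval] at haS
                rcases Set.mem_insert_iff.1 haS with h2 | h2
                · exact ha.2 (Set.mem_insert_iff.2 (Or.inl h2))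
                rcases Set.mem_insert_iff.1 h2 with h2 | h2
                · exact ha.2 (Set.mem_insert_iff.2 (Or.inr (Set.mem_singleton_iff.2 h2)))
                · rw [Set.mem_singleton_iff] at h2
                  exact hzs (h2 ▸ ha.1)
            have hcJ := ncard_insert2 (t := s \ ({(u' : V), x} : Set V)) hw12
              (fun h => hw1A (hsA h.1)) (fun h => hw2A (hsA h.1))
            have hdiff : s.ncard - 1 ≤ (s \ ({(u' : V), x} : Set V)).ncard := by
              apply ncard_diff_pair_ge
              by_cases hxs : x ∈ s
              · exact Or.inl (fun h => hsInd _ h _ hxs huadj.symm)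
              · exact Or.inr hxs
            have hbd := hS.bound hJS hJind
            rw [hcJ, halpha] at hbd
            omega
        · -- the genuine case : u' is an untouched bivalent vertex
          have hNoD : G.neighborSet (u' : V) =
              Subtype.val '' ((G.induce A).neighborSet u') := by
            ext b
            constructor
            · intro hb
              have hbA : b ∈ A := by
                by_contra hbD
                have hbD' : b ∈ ({v, w1, w2} : Set V) := by by_contra h'; exact hbD h'
                rcases hbD' with rfl | hbD'
                · rcases (hv (u' : V)).1 hb.symm with h | h
                  · exact hw1A (h ▸ u'.2)
                  · exact hw2A (h ▸ u'.2)
                rcases hbD' with rfl | hbD'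
                · rcases (hw1 (u' : V)).1 hb.symm with h | h
                  · exact hvA (h ▸ u'.2)
                  · exact hux h
                · rw [Set.mem_singleton_iff] at hbD'
                  subst hbD'
                  rcases (hw2adj (u' : V)).1 hb.symm with h | h | h
                  · exact hvA (h ▸ u'.2)
                  · exact huadj (by rw [h]; exact gxy1)
                  · exact huadj (by rw [h]; exact gxy2)
              exact ⟨⟨b, hbA⟩, hb, rfl⟩
            · rintro ⟨b', hb', rfl⟩; exact hb'
          have hdegu : deg G (u' : V) = 2 := by
            rw [deg_def, hNoD, Set.ncard_image_of_injective _ Subtype.val_injective]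
            exact hdeg'
          refine ⟨(u' : V), hdegu, ?_, hS3'⟩
          rw [hSeq]
          unfold closedNbhd
          rw [hNoD]
  -- assemble the four parts of Good G
  refine ⟨?_, ?_, ?_, ?_⟩
  · -- destabiliser statement
    intro S hSd
    constructor
    · by_contra hcon
      push_neg at hcon
      obtain ⟨u, -, -, h3⟩ := hkey S hSd (by omega)
      omega
    · intro h3
      obtain ⟨u, hdu, hSe, -⟩ := hkey S hSd (le_of_eq h3)
      exact ⟨u, hdu, hSe⟩
  · -- triangle-free
    have ngvy1 : ¬ G.Adj v (Y1 : V) := by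
      intro h
      rcases (hv _).1 h with h' | h'
      · exact hw1y1 h'.symm
      · exact hw2y1 h'.symm
    have ngvy2 : ¬ G.Adj v (Y2 : V) := by
      intro h
      rcases (hv _).1 h with h' | h'
      · exact hw1y2 h'.symm
      · exact hw2y2 h'.symm
    have hyy : ¬ G.Adj (Y1 : V) (Y2 : V) := fun h => iht ⟨x, hxA⟩ Y1 Y2 gxy1 gxy2 h
    have hnoD : ∀ p q r : V, p ∈ ({v, w1, w2} : Set V) →
        G.Adj p q → G.Adj p r → G.Adj q r → False := by
      intro p q r hp hpq hpr hqr
      have hqr_ne : q ≠ r := G.ne_of_adj hqr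
      rcases hp with rfl | hp
      · have hq := (hv q).1 hpq
        have hr := (hv r).1 hpr
        rcases hq with rfl | rfl <;> rcases hr with rfl | rfl
        · exact hqr_ne rfl
        · exact ngw1w2 hqr
        · exact ngw1w2 hqr.symm
        · exact hqr_ne rfl
      rcases hp with rfl | hp
      · have hq := (hw1 q).1 hpq
        have hr := (hw1 r).1 hpr
        rcases hq with rfl | rfl <;> rcases hr with rfl | rfl
        · exact hqr_ne rfl
        · exact ngvx hqr
        · exact ngvx hqr.symm
        · exact hqr_ne rfl
      · rw [Set.mem_singleton_iff] at hp
        subst hp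
        have hq := (hw2adj q).1 hpq
        have hr := (hw2adj r).1 hpr
        rcases hq with rfl | rfl | rfl <;> rcases hr with rfl | rfl | rfl
        · exact hqr_ne rfl
        · exact ngvy1 hqr
        · exact ngvy2 hqr
        · exact ngvy1 hqr.symm
        · exact hqr_ne rfl
        · exact hyy hqr
        · exact ngvy2 hqr.symm
        · exact hyy hqr.symm
        · exact hqr_ne rfl
    intro a b c hab hac hbc
    by_cases haD : a ∈ ({v, w1, w2} : Set V)
    · exact hnoD a b c haD hab hac hbc
    by_cases hbD : b ∈ ({v, w1, w2} : Set V)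
    · exact hnoD b a c hbD hab.symm hbc hac
    by_cases hcD : c ∈ ({v, w1, w2} : Set V)
    · exact hnoD c a b hcD hac.symm hbc.symm hab
    · exact iht ⟨a, haD⟩ ⟨b, hbD⟩ ⟨c, hcD⟩ hab hac hbc
  · -- minimum degree two
    intro u
    by_cases huD : u ∈ ({v, w1, w2} : Set V)
    · rcases huD with rfl | huD
      · rw [degv]
      rcases huD with rfl | huD
      · rw [degw1]
      · rw [Set.mem_singleton_iff] at huD
        subst huD
        rw [degw2]; omega
    · have hsub : Subtype.val '' ((G.induce A).neighborSet ⟨u, huD⟩) ⊆ G.neighborSet u := by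
        rintro b ⟨b', hb', rfl⟩; exact hb'
      calc 2 ≤ deg (G.induce A) ⟨u, huD⟩ := ihm _
        _ = (Subtype.val '' ((G.induce A).neighborSet ⟨u, huD⟩)).ncard :=
            (Set.ncard_image_of_injective _ Subtype.val_injective).symm
        _ ≤ (G.neighborSet u).ncard := Set.ncard_le_ncard hsub (Set.toFinite _)
        _ = deg G u := rfl
  · -- no two bivalent vertices share their neighbourhood
    have hOld : ∀ (u : V) (hu : u ∈ A), deg G u = 2 →
        G.neighborSet u = Subtype.val '' ((G.induce A).neighborSet ⟨u, hu⟩) := by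
      intro u hu hdu
      have hnoDnb : ∀ d ∈ ({v, w1, w2} : Set V), ¬ G.Adj u d := by
        intro d hd hadj
        rcases hd with rfl | hd
        · rcases (hv u).1 hadj.symm with rfl | rfl
          · exact hw1A hu
          · exact hw2A hu
        rcases hd with rfl | hd
        · rcases (hw1 u).1 hadj.symm with rfl | rfl
          · exact hvA hu
          · rw [degx] at hdu; omega
        · rw [Set.mem_singleton_iff] at hd
          rw [hd] at hadj
          rcases (hw2adj u).1 hadj.symm with rfl | rfl | rfl
          · exact hvA hu
          · -- u = y1 has degree at least 3
            have hsub : insert w2 (Subtype.val '' ((G.induce A).neighborSet Y1)) ⊆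
                G.neighborSet (Y1 : V) := by
              intro b hb
              rcases Set.mem_insert_iff.1 hb with rfl | hb
              · exact gw2y1.symm
              · obtain ⟨b', hb', rfl⟩ := hb
                exact hb'
            have hw2ni : w2 ∉ Subtype.val '' ((G.induce A).neighborSet Y1) := by
              rintro ⟨b', -, hbe⟩
              exact hw2A (hbe ▸ b'.2)
            have hc := Set.ncard_le_ncard hsub (Set.toFinite _)
            rw [Set.ncard_insert_of_notMem hw2ni (Set.toFinite _),
              Set.ncard_image_of_injective _ Subtype.val_injective] at hc
            have hm := ihm Y1
            rw [deg_def] at hdu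
            rw [deg_def] at hm
            omega
          · have hsub : insert w2 (Subtype.val '' ((G.induce A).neighborSet Y2)) ⊆
                G.neighborSet (Y2 : V) := by
              intro b hb
              rcases Set.mem_insert_iff.1 hb with rfl | hb
              · exact gw2y2.symm
              · obtain ⟨b', hb', rfl⟩ := hb
                exact hb'
            have hw2ni : w2 ∉ Subtype.val '' ((G.induce A).neighborSet Y2) := by
              rintro ⟨b', -, hbe⟩
              exact hw2A (hbe ▸ b'.2)
            have hc := Set.ncard_le_ncard hsub (Set.toFinite _)
            rw [Set.ncard_insert_of_notMem hw2ni (Set.toFinite _),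
              Set.ncard_image_of_injective _ Subtype.val_injective] at hc
            have hm := ihm Y2
            rw [deg_def] at hdu
            rw [deg_def] at hm
            omega
      ext b
      constructor
      · intro hb
        have hbA : b ∈ A := by
          by_contra hbD
          have hbD' : b ∈ ({v, w1, w2} : Set V) := by by_contra h'; exact hbD h'
          exact hnoDnb b hbD' hb
        exact ⟨⟨b, hbA⟩, hb, rfl⟩
      · rintro ⟨b', hb', rfl⟩; exact hb'
    intro u₁ u₂ h1 h2 hN
    by_cases hu1D : u₁ ∈ ({v, w1, w2} : Set V)
    · by_cases hu2D : u₂ ∈ ({v, w1, w2} : Set V)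
      · -- both new : must both be v or both w1
        have hc1 : u₁ = v ∨ u₁ = w1 := by
          rcases hu1D with rfl | hd
          · exact Or.inl rfl
          rcases hd with rfl | hd
          · exact Or.inr rfl
          · rw [Set.mem_singleton_iff] at hd
            rw [hd, degw2] at h1; omega
        have hc2 : u₂ = v ∨ u₂ = w1 := by
          rcases hu2D with rfl | hd
          · exact Or.inl rfl
          rcases hd with rfl | hd
          · exact Or.inr rfl
          · rw [Set.mem_singleton_iff] at hd
            rw [hd, degw2] at h2; omega
        rcases hc1 with he1 | he1 <;> rcases hc2 with he2 | he2
        · rw [he1, he2]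
        · exfalso
          rw [he1, he2] at hN
          have hmw : w1 ∈ G.neighborSet w1 := by
            rw [← hN, Nv]; exact Set.mem_insert _ _
          rw [Nw1] at hmw
          rcases Set.mem_insert_iff.1 hmw with h' | h'
          · exact hvw1 h'.symm
          · rw [Set.mem_singleton_iff] at h'
            exact hxw1 h'.symm
        · exfalso
          rw [he1, he2] at hN
          have hmw : w1 ∈ G.neighborSet w1 := by
            rw [hN, Nv]; exact Set.mem_insert _ _
          rw [Nw1] at hmw
          rcases Set.mem_insert_iff.1 hmw with h' | h'
          · exact hvw1 h'.symm
          · rw [Set.mem_singleton_iff] at h'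
            exact hxw1 h'.symm
        · rw [he1, he2]
      · exfalso
        have hAll : ∀ b ∈ G.neighborSet u₂, b ∈ A := by
          rw [hOld u₂ hu2D h2]
          rintro b ⟨b', -, rfl⟩
          exact b'.2
        have hc1 : u₁ = v ∨ u₁ = w1 := by
          rcases hu1D with rfl | hd
          · exact Or.inl rfl
          rcases hd with rfl | hd
          · exact Or.inr rfl
          · rw [Set.mem_singleton_iff] at hd
            rw [hd, degw2] at h1; omega
        rcases hc1 with he1 | he1 <;> rw [he1] at hN
        · exact hw1A (hAll w1 (by rw [← hN, Nv]; exact Set.mem_insert _ _))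
        · exact hvA (hAll v (by rw [← hN, Nw1]; exact Set.mem_insert _ _))
    · by_cases hu2D : u₂ ∈ ({v, w1, w2} : Set V)
      · exfalso
        have hAll : ∀ b ∈ G.neighborSet u₁, b ∈ A := by
          rw [hOld u₁ hu1D h1]
          rintro b ⟨b', -, rfl⟩
          exact b'.2
        have hc2 : u₂ = v ∨ u₂ = w1 := by
          rcases hu2D with rfl | hd
          · exact Or.inl rfl
          rcases hd with rfl | hd
          · exact Or.inr rfl
          · rw [Set.mem_singleton_iff] at hd
            rw [hd, degw2] at h2; omega
        rcases hc2 with he2 | he2 <;> rw [he2] at hN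
        · exact hw1A (hAll w1 (by rw [hN, Nv]; exact Set.mem_insert _ _))
        · exact hvA (hAll v (by rw [hN, Nw1]; exact Set.mem_insert _ _))
      · -- both old
        have e1 := hOld u₁ hu1D h1
        have e2 := hOld u₂ hu2D h2
        have hNval : Subtype.val '' ((G.induce A).neighborSet ⟨u₁, hu1D⟩) =
            Subtype.val '' ((G.induce A).neighborSet ⟨u₂, hu2D⟩) := by
          rw [← e1, ← e2, hN]
        have hN' : (G.induce A).neighborSet ⟨u₁, hu1D⟩ =
            (G.induce A).neighborSet ⟨u₂, hu2D⟩ :=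
          (Set.image_injective.2 Subtype.val_injective) hNval
        have hd1 : deg (G.induce A) ⟨u₁, hu1D⟩ = 2 := by
          rw [deg_def, ← Set.ncard_image_of_injective _ Subtype.val_injective, ← e1]
          rw [deg_def] at h1
          exact h1
        have hd2 : deg (G.induce A) ⟨u₂, hu2D⟩ = 2 := by
          rw [deg_def, ← Set.ncard_image_of_injective _ Subtype.val_injective, ← e2]
          rw [deg_def] at h2
          exact h2
        have := ihtw _ _ hd1 hd2 hN'
        exact congrArg Subtype.val this
end step
lemma ncard_closedNbhd {V : Type} [Finite V] (G : SimpleGraph V) (u : V) :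
    (closedNbhd G u).ncard = deg G u + 1 := by
  unfold closedNbhd
  have h : u ∉ G.neighborSet u := fun h => G.loopless.irrefl u h
  rw [Set.ncard_insert_of_notMem h (Set.toFinite _), deg_def]

lemma chain_good : ∀ {V : Type} (G : SimpleGraph V) (k : ℕ),
    IsChainGraph G k → Finite V → Good G := by
  intro V G k hch
  induction hch with
  | base G e =>
    intro hfin
    haveI := hfin
    exact good_iso e good_c5
  | step G k v w1 w2 x hvw1 hvw2 hw12 hx hchain hdeg hv hw1 hw2 ih =>
    intro hfin
    haveI := hfin
    exact good_step G v w1 w2 x hvw1 hvw2 hw12 hx hdeg hv hw1 hw2 (ih inferInstance)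

/-- Every destabiliser of `Ch_k` (`k ≥ 2`) has size at least 3, with size exactly 3
precisely for the closed neighbourhoods of bivalent vertices. -/
theorem stmt13 {V : Type} [Fintype V] (G : SimpleGraph V) (k : ℕ) (hk : 2 ≤ k)
    (hch : IsChainGraph G k) (S : Set V) (hS : Destab G S) :
    3 ≤ S.ncard ∧ (S.ncard = 3 ↔ ∃ v, deg G v = 2 ∧ S = closedNbhd G v) := by
  haveI : Finite V := Finite.of_fintype V
  obtain ⟨hd, -, -, -⟩ := chain_good G k hch inferInstance
  obtain ⟨h3, hchar⟩ := hd S hS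
  refine ⟨h3, hchar, ?_⟩
  rintro ⟨u, hdu, rfl⟩
  rw [ncard_closedNbhd, hdu]
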